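/- Let I ⊆ ℝ be an open interval, let γ : I → ℝ² be a C¹ curve parametrized by arc length with unit tangent τ(s) = γ'(s), and let n : I → ℝ² be a differentiable map of unit vectors with τ(s) = (−n₂(s), n₁(s)) and n'(s) = κ(s) τ(s) for a function κ : I → ℝ. Let v : ℝ² → ℝ² be C¹ with v(γ(s)) · n(s) = 0 for all s ∈ I, and let D(v)(x) = ½(Dv(x) + Dv(x)ᵀ) be the rate-of-strain tensor. Then for all s ∈ I, (D(v)(γ(s)) n(s)) · τ(s) = ½ ω(v)(γ(s)) − κ(s) (v(γ(s)) · τ(s)). -/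

import Mathlib

noncomputable section

/-- Dot product on `ℝ²` (realized as `Fin 2 → ℝ`). -/
def dot2 (u w : Fin 2 → ℝ) : ℝ := u 0 * w 0 + u 1 * w 1

/-- Vorticity `ω(v)(x) = ∂₁v²(x) − ∂₂v¹(x)` (components indexed `0,1`). -/
def vort (v : (Fin 2 → ℝ) → Fin 2 → ℝ) (x : Fin 2 → ℝ) : ℝ :=
  fderiv ℝ v x (Pi.single 0 1) 1 - fderiv ℝ v x (Pi.single 1 1) 0

/-- Rate-of-strain tensor `D(v)(x) = ½(Dv(x) + Dv(x)ᵀ)`, acting on a vector `u`. -/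
def strain (v : (Fin 2 → ℝ) → Fin 2 → ℝ) (x u : Fin 2 → ℝ) : Fin 2 → ℝ :=
  fun i => (1 / 2) * (fderiv ℝ v x u i + dot2 (fun j => fderiv ℝ v x (Pi.single i 1) j) u)

/-- Along a `C¹` arc-length curve `γ` in the open interval `(a,b)`, with unit normal `n`,
positively-oriented tangent `τ = (−n₂, n₁) = γ'` and `n' = κ τ`, if a `C¹` vector field `v`
satisfies `v(γ(s)) ⬝ n(s) = 0`, then
`(D(v)(γ(s)) n(s)) ⬝ τ(s) = ½ ω(v)(γ(s)) − κ(s) (v(γ(s)) ⬝ τ(s))`. -/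
theorem strain_n_dot_tau (a b : ℝ) (γ τ n : ℝ → Fin 2 → ℝ) (κ : ℝ → ℝ)
    (v : (Fin 2 → ℝ) → Fin 2 → ℝ)
    (hγ : ∀ s ∈ Set.Ioo a b, HasDerivAt γ (τ s) s)
    (hτcont : ContinuousOn τ (Set.Ioo a b))
    (hτunit : ∀ s ∈ Set.Ioo a b, dot2 (τ s) (τ s) = 1)
    (hnunit : ∀ s ∈ Set.Ioo a b, dot2 (n s) (n s) = 1)
    (hτdef : ∀ s ∈ Set.Ioo a b, τ s = ![-(n s 1), n s 0])
    (hn' : ∀ s ∈ Set.Ioo a b, HasDerivAt n (κ s • τ s) s)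
    (hv : ContDiff ℝ 1 v)
    (htang : ∀ s ∈ Set.Ioo a b, dot2 (v (γ s)) (n s) = 0) :
    ∀ s ∈ Set.Ioo a b,
      dot2 (strain v (γ s) (n s)) (τ s) =
        (1 / 2) * vort v (γ s) - κ s * dot2 (v (γ s)) (τ s) := by
  intro s hs
  have hsopen : Set.Ioo a b ∈ nhds s := (isOpen_Ioo).mem_nhds hs
  have hvd : HasFDerivAt v (fderiv ℝ v (γ s)) (γ s) :=
    (hv.differentiable one_ne_zero (γ s)).hasFDerivAt
  set A := fderiv ℝ v (γ s) with hA
  have hcomp : HasDerivAt (fun t => v (γ t)) (A (τ s)) s :=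
    hvd.comp_hasDerivAt s (hγ s hs)
  have hcompi : ∀ i : Fin 2, HasDerivAt (fun t => v (γ t) i) (A (τ s) i) s := by
    intro i
    have := (ContinuousLinearMap.proj i : (Fin 2 → ℝ) →L[ℝ] ℝ).hasFDerivAt.comp_hasDerivAt s hcomp
    exact this
  have hni : ∀ i : Fin 2, HasDerivAt (fun t => n t i) ((κ s • τ s) i) s := by
    intro i
    have := (ContinuousLinearMap.proj i : (Fin 2 → ℝ) →L[ℝ] ℝ).hasFDerivAt.comp_hasDerivAt s (hn' s hs)
    exact this
  have hdot : HasDerivAt (fun t => dot2 (v (γ t)) (n t))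
      (A (τ s) 0 * n s 0 + v (γ s) 0 * (κ s • τ s) 0
        + (A (τ s) 1 * n s 1 + v (γ s) 1 * (κ s • τ s) 1)) s := by
    unfold dot2
    exact ((hcompi 0).mul (hni 0)).add ((hcompi 1).mul (hni 1))
  have hzero : (fun t => dot2 (v (γ t)) (n t)) =ᶠ[nhds s] fun _ => 0 := by
    filter_upwards [hsopen] with t ht using htang t ht
  have hdz : HasDerivAt (fun t => dot2 (v (γ t)) (n t)) 0 s :=
    (hasDerivAt_const s (0:ℝ)).congr_of_eventuallyEq hzero
  have hkey := hdot.unique hdz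
  have hAexp : ∀ u : Fin 2 → ℝ, ∀ i, A u i
      = u 0 * A (Pi.single 0 1) i + u 1 * A (Pi.single 1 1) i := by
    intro u i
    have hu : u = u 0 • (Pi.single 0 1 : Fin 2 → ℝ) + u 1 • (Pi.single 1 1 : Fin 2 → ℝ) := by
      ext j; fin_cases j <;> simp
    conv_lhs => rw [hu]
    simp [smul_eq_mul]
  have hτ0 : τ s 0 = -(n s 1) := by rw [hτdef s hs]; simp
  have hτ1 : τ s 1 = n s 0 := by rw [hτdef s hs]; simp
  have hunit : n s 0 * n s 0 + n s 1 * n s 1 = 1 := hnunit s hs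
  have hAτ : ∀ i, A (τ s) i = τ s 0 * A (Pi.single 0 1) i + τ s 1 * A (Pi.single 1 1) i :=
    fun i => hAexp (τ s) i
  have hAn : ∀ i, A (n s) i = n s 0 * A (Pi.single 0 1) i + n s 1 * A (Pi.single 1 1) i :=
    fun i => hAexp (n s) i
  simp only [Pi.smul_apply, smul_eq_mul, hAτ, hτ0, hτ1] at hkey
  simp only [dot2, strain, vort, ← hA, hAn, hτ0, hτ1]
  linear_combination hkey +
    (1/2) * (A (Pi.single 0 1) 1 - A (Pi.single 1 1) 0) * hunit

end
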